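/- Let H be a linear forest, let G be a complete k-partite graph with parts A_1, …, A_k, and fix two parts A_1, A_2. Suppose G' is obtained from G by replacing the complete bipartite graph induced on A_1 ∪ A_2 by another complete bipartite graph on the same vertex set A_1 ∪ A_2 (keeping all edges between A_1 ∪ A_2 and the remaining parts, and all edges among the remaining parts). If for every linear forest H' that is a subgraph of H, the number of copies of H' inside A_1 ∪ A_2 does not decrease when passing from G to G', then N(H,G') ≥ N(H,G). -/

import Mathlib

open SimpleGraph

/-- The number of copies of `H` in `G`, i.e. the number of subgraphs of `G` isomorphic to `H`. -/
noncomputable def numCopies {α β : Type*} (H : SimpleGraph α) (G : SimpleGraph β) : ℕ :=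
  Nat.card {G' : G.Subgraph // Nonempty (H ≃g G'.coe)}

/-- `G` contains a subgraph isomorphic to `F`. -/
def Contains {α β : Type*} (F : SimpleGraph α) (G : SimpleGraph β) : Prop :=
  ∃ f : α → β, Function.Injective f ∧ ∀ a b, F.Adj a b → G.Adj (f a) (f b)

/-- A linear forest: an acyclic graph of maximum degree at most 2,
equivalently a disjoint union of paths. -/
def IsLinearForest {α : Type*} (H : SimpleGraph α) : Prop :=
  H.IsAcyclic ∧ ∀ v, (H.neighborSet v).ncard ≤ 2

/-- `G` is a complete `k`-partite graph with parts given by `f`. -/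
def IsCompleteKPartite {V : Type*} (k : ℕ) (G : SimpleGraph V) : Prop :=
  ∃ f : V → Fin k, ∀ u v, G.Adj u v ↔ f u ≠ f v

def Emb' {α β : Type*} (H : SimpleGraph α) (G : SimpleGraph β) :=
  {φ : α → β // Function.Injective φ ∧ ∀ a b, H.Adj a b → G.Adj (φ a) (φ b)}

instance {α β : Type*} [Finite α] [Finite β] (H : SimpleGraph α) (G : SimpleGraph β) :
    Finite (Emb' H G) := Subtype.finite

instance autFinite {α : Type*} [Finite α] (H : SimpleGraph α) : Finite (H ≃g H) :=
  Finite.of_injective (fun e => e.toEquiv) (fun a b h => by cases a; cases b; simpa using h)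

/-- The subgraph given by an embedding. -/
def embSub {α β : Type*} (H : SimpleGraph α) (G : SimpleGraph β) (φ : Emb' H G) : G.Subgraph where
  verts := Set.range φ.1
  Adj u v := ∃ a b, H.Adj a b ∧ φ.1 a = u ∧ φ.1 b = v
  adj_sub := by rintro u v ⟨a, b, hab, rfl, rfl⟩; exact φ.2.2 a b hab
  edge_vert := by rintro u v ⟨a, b, hab, rfl, rfl⟩; exact ⟨a, rfl⟩
  symm := by constructor; rintro u v ⟨a, b, hab, rfl, rfl⟩; exact ⟨b, a, hab.symm, rfl, rfl⟩

noncomputable def embIso {α β : Type*} (H : SimpleGraph α) (G : SimpleGraph β) (φ : Emb' H G) :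
    H ≃g (embSub H G φ).coe where
  toEquiv := Equiv.ofInjective φ.1 φ.2.1
  map_rel_iff' := by
    intro a b
    constructor
    · rintro ⟨a', b', hab, ha, hb⟩
      rw [φ.2.1 ha, φ.2.1 hb] at hab; exact hab
    · intro h; exact ⟨a, b, h, rfl, rfl⟩

lemma adj_iff_of_iso {α β : Type*} {H : SimpleGraph α} {G : SimpleGraph β} (S : G.Subgraph)
    (e : H ≃g S.coe) (u v : β) :
    S.Adj u v ↔ ∃ a b, H.Adj a b ∧ (e a : β) = u ∧ (e b : β) = v := by
  constructor
  · intro h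
    have hu : u ∈ S.verts := S.edge_vert h
    have hv : v ∈ S.verts := S.edge_vert h.symm
    refine ⟨e.symm ⟨u, hu⟩, e.symm ⟨v, hv⟩, ?_, by simp, by simp⟩
    have : S.coe.Adj ⟨u, hu⟩ ⟨v, hv⟩ := h
    exact e.symm.map_rel_iff.mpr this
  · rintro ⟨a, b, hab, rfl, rfl⟩
    exact (e.map_rel_iff.mpr hab : S.coe.Adj (e a) (e b))

lemma card_emb {α β : Type*} [Finite α] [Finite β] (H : SimpleGraph α) (G : SimpleGraph β) :
    Nat.card (Emb' H G) = numCopies H G * Nat.card (H ≃g H) := by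
  classical
  rw [numCopies, ← Nat.card_prod]
  refine (Nat.card_eq_of_bijective ?_ ?_).symm
  · rintro ⟨S, a⟩
    refine ⟨fun x => (S.2.some (a x) : β), ?_, ?_⟩
    · intro x y h
      exact a.injective (S.2.some.injective (Subtype.ext h))
    · intro x y h
      have : S.1.coe.Adj (S.2.some (a x)) (S.2.some (a y)) :=
        S.2.some.map_rel_iff.mpr (a.map_rel_iff.mpr h)
      exact S.1.adj_sub this
  constructor
  · rintro ⟨S, a⟩ ⟨S', a'⟩ h
    have hfun : (fun x => (S.2.some (a x) : β)) = fun x => (S'.2.some (a' x) : β) :=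
      congrArg Subtype.val h
    have hSS : S = S' := by
      refine Subtype.ext (SimpleGraph.Subgraph.ext ?_ ?_)
      · have h1 : S.1.verts = Set.range fun x => (S.2.some (a x) : β) := by
          ext u
          constructor
          · intro hu
            exact ⟨a.symm (S.2.some.symm ⟨u, hu⟩), by simp⟩
          · rintro ⟨x, rfl⟩; exact (S.2.some (a x)).2
        have h2 : S'.1.verts = Set.range fun x => (S'.2.some (a' x) : β) := by
          ext u
          constructor
          · intro hu
            exact ⟨a'.symm (S'.2.some.symm ⟨u, hu⟩), by simp⟩
          · rintro ⟨x, rfl⟩; exact (S'.2.some (a' x)).2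
        rw [h1, h2, hfun]
      · ext u v
        rw [adj_iff_of_iso S.1 (a.trans S.2.some) u v,
            adj_iff_of_iso S'.1 (a'.trans S'.2.some) u v]
        constructor
        · rintro ⟨x, y, hxy, hx, hy⟩
          refine ⟨x, y, hxy, ?_, ?_⟩
          · show (S'.2.some (a' x) : β) = u
            rw [← congrFun hfun x]; exact hx
          · show (S'.2.some (a' y) : β) = v
            rw [← congrFun hfun y]; exact hy
        · rintro ⟨x, y, hxy, hx, hy⟩
          refine ⟨x, y, hxy, ?_, ?_⟩
          · show (S.2.some (a x) : β) = u
            rw [congrFun hfun x]; exact hx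
          · show (S.2.some (a y) : β) = v
            rw [congrFun hfun y]; exact hy
    subst hSS
    have : a = a' := by
      have : ∀ x, a x = a' x := by
        intro x
        exact S.2.some.injective (Subtype.ext (congrFun hfun x))
      exact RelIso.ext this
    rw [this]
  · rintro ⟨φ, hinj, hadj⟩
    set Φ : Emb' H G := ⟨φ, hinj, hadj⟩
    refine ⟨⟨⟨embSub H G Φ, ⟨embIso H G Φ⟩⟩, ?_⟩, ?_⟩
    · exact (embIso H G Φ).trans
        ((⟨embSub H G Φ, ⟨embIso H G Φ⟩⟩ : {S : G.Subgraph // Nonempty (H ≃g S.coe)}).2.some).symm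
    · apply Subtype.ext
      funext x
      show ((( ⟨embSub H G Φ, ⟨embIso H G Φ⟩⟩ : {S : G.Subgraph // Nonempty (H ≃g S.coe)}).2.some
        ((((⟨embSub H G Φ, ⟨embIso H G Φ⟩⟩ : {S : G.Subgraph // Nonempty (H ≃g S.coe)}).2.some).symm)
          (embIso H G Φ x)) : β)) = φ x
      rw [RelIso.apply_symm_apply]
      rfl


-- linear forest lemma
lemma isLinearForest_induce {α : Type*} [Finite α] {H : SimpleGraph α} (hH : IsLinearForest H)
    (B : Set α) : IsLinearForest ((⊤ : H.Subgraph).induce B).coe := by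
  constructor
  · intro v c hc
    exact hH.1 (c.map ((⊤ : H.Subgraph).induce B).hom)
      ((SimpleGraph.Walk.map_isCycle_iff_of_injective
        (SimpleGraph.Subgraph.hom_injective)).mpr hc)
  · intro v
    have himg : Subtype.val '' (((⊤ : H.Subgraph).induce B).coe.neighborSet v)
        ⊆ H.neighborSet ↑v := by
      rintro x ⟨u, hu, rfl⟩
      have h1 : ((⊤ : H.Subgraph).induce B).coe.Adj v u := hu
      have h2 : ((⊤ : H.Subgraph).induce B).Adj ↑v ↑u := h1
      exact h2.adj_sub
    calc (((⊤ : H.Subgraph).induce B).coe.neighborSet v).ncard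
        = (Subtype.val '' (((⊤ : H.Subgraph).induce B).coe.neighborSet v)).ncard :=
          (Set.ncard_image_of_injective _ Subtype.val_injective).symm
      _ ≤ (H.neighborSet ↑v).ncard := Set.ncard_le_ncard himg (Set.toFinite _)
      _ ≤ 2 := hH.2 ↑v

-- fiber decomposition of Nat.card
lemma nat_card_eq_sum_fibers {X ι : Type*} [Finite X] [Fintype ι] (f : X → ι) :
    Nat.card X = ∑ i, Nat.card {x // f x = i} := by
  classical
  letI := Fintype.ofFinite X
  rw [Nat.card_eq_fintype_card, ← Fintype.card_congr (Equiv.sigmaFiberEquiv f),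
    Fintype.card_sigma]
  exact Finset.sum_congr rfl fun i _ => (Nat.card_eq_fintype_card).symm

section Transfer
variable {α V : Type*} (H : SimpleGraph α) (G G' : SimpleGraph V) (W : Set V) (B : Set α)

/-- The restriction of an embedding with `φ ⁻¹' W = B` to `B`, as an embedding of the
induced subgraph on `B` into `induce W G`. -/
def psiOf (p : {φ : Emb' H G // φ.1 ⁻¹' W = B}) :
    Emb' ((⊤ : H.Subgraph).induce B).coe (SimpleGraph.induce W G) :=
  ⟨fun x => ⟨p.1.1 x.1, by
      obtain ⟨a, hx⟩ := x
      have hx' : a ∈ B := hx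
      rw [← p.2] at hx'
      exact hx'⟩,
   fun x y hxy => Subtype.ext (p.1.2.1 (congrArg Subtype.val hxy)),
   fun x y hxy => by
     have h3 : H.Adj ↑x ↑y := (hxy : ((⊤ : H.Subgraph).induce B).Adj ↑x ↑y).2.2
     exact p.1.2.2 _ _ h3⟩

variable (i : Emb' ((⊤ : H.Subgraph).induce B).coe (SimpleGraph.induce W G) →
    Emb' ((⊤ : H.Subgraph).induce B).coe (SimpleGraph.induce W G'))

/-- Reassembled function: use the transferred inner embedding on `B`, the old values off `B`. -/
noncomputable def FOf (p : {φ : Emb' H G // φ.1 ⁻¹' W = B}) : α → V := by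
  classical
  exact fun a => if h : a ∈ B then ((i (psiOf H G W B p)).1 ⟨a, h⟩ : V) else p.1.1 a

lemma FOf_pos (p : {φ : Emb' H G // φ.1 ⁻¹' W = B}) (a : α) (h : a ∈ B) :
    FOf H G G' W B i p a = ((i (psiOf H G W B p)).1 ⟨a, h⟩ : V) := by
  simp [FOf, h]

lemma FOf_neg (p : {φ : Emb' H G // φ.1 ⁻¹' W = B}) (a : α) (h : a ∉ B) :
    FOf H G G' W B i p a = p.1.1 a := by
  simp [FOf, h]

lemma FOf_mem_iff (p : {φ : Emb' H G // φ.1 ⁻¹' W = B}) (a : α) :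
    FOf H G G' W B i p a ∈ W ↔ a ∈ B := by
  by_cases h : a ∈ B
  · rw [FOf_pos H G G' W B i p a h]
    exact iff_of_true ((i (psiOf H G W B p)).1 ⟨a, h⟩).2 h
  · rw [FOf_neg H G G' W B i p a h]
    constructor
    · intro hw
      have : a ∈ p.1.1 ⁻¹' W := hw
      rw [p.2] at this
      exact absurd this h
    · intro hb; exact absurd hb h

lemma fiber_card_le [Fintype α] [Fintype V]
    (crossG' : ∀ u v, u ∈ W → v ∉ W → G'.Adj u v)
    (houtG' : ∀ u v, u ∉ W → v ∉ W → G.Adj u v → G'.Adj u v)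
    (hE : Nat.card (Emb' ((⊤ : H.Subgraph).induce B).coe (SimpleGraph.induce W G)) ≤
        Nat.card (Emb' ((⊤ : H.Subgraph).induce B).coe (SimpleGraph.induce W G'))) :
    Nat.card {φ : Emb' H G // φ.1 ⁻¹' W = B} ≤ Nat.card {φ : Emb' H G' // φ.1 ⁻¹' W = B} := by
  classical
  obtain ⟨i, hi⟩ : ∃ i : Emb' ((⊤ : H.Subgraph).induce B).coe (SimpleGraph.induce W G) →
      Emb' ((⊤ : H.Subgraph).induce B).coe (SimpleGraph.induce W G'), Function.Injective i := by
    letI := Fintype.ofFinite (Emb' ((⊤ : H.Subgraph).induce B).coe (SimpleGraph.induce W G))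
    letI := Fintype.ofFinite (Emb' ((⊤ : H.Subgraph).induce B).coe (SimpleGraph.induce W G'))
    rw [Nat.card_eq_fintype_card, Nat.card_eq_fintype_card] at hE
    obtain ⟨j⟩ := Function.Embedding.nonempty_of_card_le hE
    exact ⟨j, j.injective⟩
  have hnotW : ∀ (p : {φ : Emb' H G // φ.1 ⁻¹' W = B}) (a : α), a ∉ B → p.1.1 a ∉ W := by
    intro p a ha hw
    have : a ∈ p.1.1 ⁻¹' W := hw
    rw [p.2] at this
    exact ha this
  have hFinj : ∀ p, Function.Injective (FOf H G G' W B i p) := by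
    intro p a b hab
    by_cases ha : a ∈ B <;> by_cases hb : b ∈ B
    · rw [FOf_pos H G G' W B i p a ha, FOf_pos H G G' W B i p b hb] at hab
      have h2 := (i (psiOf H G W B p)).2.1 (Subtype.ext hab)
      exact congrArg Subtype.val h2
    · exfalso
      have h1 : FOf H G G' W B i p a ∈ W := (FOf_mem_iff H G G' W B i p a).mpr ha
      have h2 : FOf H G G' W B i p b ∉ W := fun hw => hb ((FOf_mem_iff H G G' W B i p b).mp hw)
      rw [hab] at h1
      exact h2 h1
    · exfalso
      have h1 : FOf H G G' W B i p b ∈ W := (FOf_mem_iff H G G' W B i p b).mpr hb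
      have h2 : FOf H G G' W B i p a ∉ W := fun hw => ha ((FOf_mem_iff H G G' W B i p a).mp hw)
      rw [hab] at h2
      exact h2 h1
    · rw [FOf_neg H G G' W B i p a ha, FOf_neg H G G' W B i p b hb] at hab
      exact p.1.2.1 hab
  have hFadj : ∀ p a b, H.Adj a b →
      G'.Adj (FOf H G G' W B i p a) (FOf H G G' W B i p b) := by
    intro p a b hab
    by_cases ha : a ∈ B <;> by_cases hb : b ∈ B
    · rw [FOf_pos H G G' W B i p a ha, FOf_pos H G G' W B i p b hb]
      have hadj : ((⊤ : H.Subgraph).induce B).coe.Adj ⟨a, ha⟩ ⟨b, hb⟩ := ⟨ha, hb, hab⟩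
      exact (i (psiOf H G W B p)).2.2 _ _ hadj
    · rw [FOf_pos H G G' W B i p a ha, FOf_neg H G G' W B i p b hb]
      exact crossG' _ _ ((i (psiOf H G W B p)).1 ⟨a, ha⟩).2 (hnotW p b hb)
    · rw [FOf_neg H G G' W B i p a ha, FOf_pos H G G' W B i p b hb]
      exact (crossG' _ _ ((i (psiOf H G W B p)).1 ⟨b, hb⟩).2 (hnotW p a ha)).symm
    · rw [FOf_neg H G G' W B i p a ha, FOf_neg H G G' W B i p b hb]
      exact houtG' _ _ (hnotW p a ha) (hnotW p b hb) (p.1.2.2 a b hab)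
  apply Nat.card_le_card_of_injective
    (fun p => (⟨⟨FOf H G G' W B i p, hFinj p, hFadj p⟩,
      Set.ext fun a => FOf_mem_iff H G G' W B i p a⟩ : {φ : Emb' H G' // φ.1 ⁻¹' W = B}))
  intro p q hpq
  have hval : ∀ a, FOf H G G' W B i p a = FOf H G G' W B i q a := fun a =>
    congrFun (congrArg (fun r : {φ : Emb' H G' // φ.1 ⁻¹' W = B} => (r.1.1 : α → V)) hpq) a
  have hpsi : psiOf H G W B p = psiOf H G W B q := by
    apply hi
    apply Subtype.ext
    funext x
    apply Subtype.ext
    have hx : (x.1 : α) ∈ B := x.2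
    have h1 := FOf_pos H G G' W B i p x.1 hx
    have h2 := FOf_pos H G G' W B i q x.1 hx
    have := hval x.1
    rw [h1, h2] at this
    simpa using this
  apply Subtype.ext
  apply Subtype.ext
  funext a
  by_cases ha : a ∈ B
  · exact congrArg (fun ψ : Emb' ((⊤ : H.Subgraph).induce B).coe (SimpleGraph.induce W G) =>
      ((ψ.1 ⟨a, ha⟩ : ↥W) : V)) hpsi
  · have := hval a
    rw [FOf_neg H G G' W B i p a ha, FOf_neg H G G' W B i q a ha] at this
    exact this

end Transfer


/-- Let `H` be a linear forest, `G` a complete `k`-partite graph with parts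
given by `f`, and `W = A₁ ∪ A₂` the union of the first two parts. Suppose `G'` agrees with
`G` on all edges meeting the complement of `W`, and inside `W` it is a complete bipartite
graph (with parts given by `g`). If for every linear forest `H'` that is a subgraph of `H`,
the number of copies of `H'` inside `W` does not decrease when passing from `G` to `G'`,
then `N(H,G') ≥ N(H,G)`. -/
theorem replace_bipartite_part_not_decrease {α V : Type*} [Fintype α] [Fintype V]
    (H : SimpleGraph α) (hH : IsLinearForest H)
    (k : ℕ) (hk : 2 ≤ k) (f : V → Fin k)
    (G : SimpleGraph V) (hG : ∀ u v, G.Adj u v ↔ f u ≠ f v)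
    (W : Set V)
    (hW : W = {v | f v = (⟨0, by omega⟩ : Fin k) ∨ f v = (⟨1, by omega⟩ : Fin k)})
    (G' : SimpleGraph V) (g : V → Fin 2)
    (hG'in : ∀ u ∈ W, ∀ v ∈ W, (G'.Adj u v ↔ g u ≠ g v))
    (hG'out : ∀ u v, (u ∉ W ∨ v ∉ W) → (G'.Adj u v ↔ G.Adj u v))
    (hmono : ∀ H' : H.Subgraph, IsLinearForest H'.coe →
      numCopies H'.coe (SimpleGraph.induce W G) ≤ numCopies H'.coe (SimpleGraph.induce W G')) :
    numCopies H G ≤ numCopies H G' := by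
  classical
  have crossG : ∀ u v, u ∈ W → v ∉ W → G.Adj u v := by
    intro u v hu hv
    rw [hG]
    intro he
    rw [hW] at hu hv
    apply hv
    simp only [Set.mem_setOf_eq] at hu ⊢
    rw [← he]
    exact hu
  have crossG' : ∀ u v, u ∈ W → v ∉ W → G'.Adj u v := fun u v hu hv =>
    (hG'out u v (Or.inr hv)).mpr (crossG u v hu hv)
  have houtG' : ∀ u v, u ∉ W → v ∉ W → G.Adj u v → G'.Adj u v := fun u v hu _ h =>
    (hG'out u v (Or.inl hu)).mpr h
  have hE : ∀ B : Set α,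
      Nat.card (Emb' ((⊤ : H.Subgraph).induce B).coe (SimpleGraph.induce W G)) ≤
      Nat.card (Emb' ((⊤ : H.Subgraph).induce B).coe (SimpleGraph.induce W G')) := by
    intro B
    have hLF := isLinearForest_induce hH B
    have hm := hmono _ hLF
    rw [card_emb, card_emb]
    exact Nat.mul_le_mul_right _ hm
  have hEmb : Nat.card (Emb' H G) ≤ Nat.card (Emb' H G') := by
    rw [nat_card_eq_sum_fibers (fun φ : Emb' H G => φ.1 ⁻¹' W),
        nat_card_eq_sum_fibers (fun φ : Emb' H G' => φ.1 ⁻¹' W)]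
    apply Finset.sum_le_sum
    intro B _
    exact fiber_card_le H G G' W B crossG' houtG' (hE B)
  have h1 := card_emb H G
  have h2 := card_emb H G'
  rw [h1, h2] at hEmb
  haveI : Nonempty (H ≃g H) := ⟨RelIso.refl _⟩
  exact Nat.le_of_mul_le_mul_right hEmb Nat.card_pos
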